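/- arXiv:2112.01413 — 4 statements merged into one kernel-verified Lean document; each statement's English description precedes it below -/
import Mathlib

section
/- For any n×n Hermitian positive definite complex matrix A, the trace of its inverse satisfies Tr(A⁻¹) ≥ Σ_{q=1}^{n} 1/A_{qq}, where A_{qq} denotes the (real, positive) q-th diagonal entry of A. -/
open scoped ComplexOrder
open Matrix

/-- For any `n × n` Hermitian positive definite complex matrix `A`, the trace of its
inverse satisfies `Tr(A⁻¹) ≥ ∑ q, 1 / A q q`, where the diagonal entries of `A` are
real and positive (so they are identified with their real parts). -/
theorem trace_inv_ge_sum_inv_diag (n : ℕ) (A : Matrix (Fin n) (Fin n) ℂ)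
    (hA : A.PosDef) :
    ∑ q : Fin n, 1 / (A q q).re ≤ (A⁻¹).trace.re := by
  have hAinv : A⁻¹.PosDef := hA.inv
  have hmul : A * A⁻¹ = 1 := Matrix.mul_nonsing_inv A hA.det_pos.ne'.isUnit
  have hmul' : A⁻¹ * A = 1 := Matrix.nonsing_inv_mul A hA.det_pos.ne'.isUnit
  have key : ∀ q : Fin n, 1 / (A q q).re ≤ (A⁻¹ q q).re := by
    intro q
    -- diagonal entries are positive
    have hdiagpos : 0 < A q q := by
      have := hA.dotProduct_mulVec_pos (x := Pi.single q 1) (by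
        intro h; simpa using congrFun h q)
      have h3 : star (Pi.single q 1 : Fin n → ℂ) ⬝ᵥ A.mulVec (Pi.single q 1) = A q q := by
        rw [← Pi.single_star, star_one, single_dotProduct, one_mul,
          Matrix.mulVec_single]
        simp
      rwa [h3] at this
    have ha : 0 < (A q q).re := (Complex.pos_iff.mp hdiagpos).1
    set a : ℝ := (A q q).re with ha_def
    set t : ℝ := 1 / a with ht_def
    set M : Matrix (Fin n) (Fin n) ℂ := (t : ℂ) • 1 - A⁻¹ with hM_def
    have hMH : Mᴴ = M := by
      simp [hM_def, Matrix.conjTranspose_smul, Complex.conj_ofReal, hAinv.1.eq]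
    have hB : Mᴴ * A * M = ((t : ℂ)^2) • A - ((2*t : ℝ) : ℂ) • 1 + A⁻¹ := by
      rw [hMH, hM_def]
      simp only [Matrix.sub_mul, Matrix.mul_sub, Matrix.smul_mul, Matrix.mul_smul,
        one_mul, mul_one, hmul, hmul', smul_smul]
      push_cast
      ring_nf
      abel_nf
      module
    have hPS := (hA.posSemidef).conjTranspose_mul_mul_same M
    rw [hB] at hPS
    have hqq := hPS.dotProduct_mulVec_nonneg (Pi.single q 1)
    have hdiag : (0:ℂ) ≤ (((t : ℂ)^2) • A - ((2*t : ℝ) : ℂ) • 1 + A⁻¹) q q := by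
      have h3 : ∀ (B : Matrix (Fin n) (Fin n) ℂ),
          star (Pi.single q 1 : Fin n → ℂ) ⬝ᵥ B.mulVec (Pi.single q 1) = B q q := by
        intro B
        rw [← Pi.single_star, star_one, single_dotProduct, one_mul,
          Matrix.mulVec_single]
        simp
      rwa [h3] at hqq
    have hre : 0 ≤ t^2 * a - 2*t + (A⁻¹ q q).re := by
      have := (Complex.nonneg_iff.mp hdiag).1
      simpa [Matrix.one_apply, Complex.add_re, Complex.sub_re, ← Complex.ofReal_pow] using this
    have : t^2 * a - 2*t = -(1/a) := by
      rw [ht_def]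
      field_simp
      ring
    rw [this] at hre
    linarith
  calc ∑ q : Fin n, 1 / (A q q).re ≤ ∑ q : Fin n, (A⁻¹ q q).re :=
        Finset.sum_le_sum fun q _ => key q
    _ = (A⁻¹).trace.re := by
        rw [Matrix.trace]
        simp [Matrix.diag]
end

section
/- For an n×n Hermitian positive definite complex matrix A, equality Tr(A⁻¹) = Σ_{q=1}^{n} 1/A_{qq} holds if and only if A is a diagonal matrix. -/
open scoped ComplexOrder
open Matrix

/-- For an `n × n` Hermitian positive definite complex matrix `A`, equality
`Tr(A⁻¹) = ∑ q, 1 / A q q` holds if and only if `A` is a diagonal matrix. -/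
theorem trace_inv_eq_sum_inv_diag_iff_diagonal (n : ℕ) (A : Matrix (Fin n) (Fin n) ℂ)
    (hA : A.PosDef) :
    (A⁻¹).trace.re = ∑ q : Fin n, 1 / (A q q).re ↔
      ∀ p q : Fin n, p ≠ q → A p q = 0 := by
  classical
  have hdet : IsUnit A.det := (Matrix.isUnit_iff_isUnit_det _).mp hA.isUnit
  have hAB : A * A⁻¹ = 1 := Matrix.mul_nonsing_inv A hdet
  have hBA : A⁻¹ * A = 1 := Matrix.nonsing_inv_mul A hdet
  have hBpd : (A⁻¹).PosDef := hA.inv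
  -- single vector facts
  have hse : ∀ q : Fin n, star (Pi.single q (1:ℂ) : Fin n → ℂ) = Pi.single q 1 := by
    intro q; ext p; rcases eq_or_ne p q with h|h <;> simp [Pi.single_apply, h]
  have hApos : ∀ q : Fin n, 0 < A q q := by
    intro q
    have h := hA.dotProduct_mulVec_pos (x := Pi.single q 1) (fun h => by simpa using congrFun h q)
    rw [hse, single_dotProduct, one_mul, mulVec_single] at h
    simpa using h
  have hBpos : ∀ q : Fin n, 0 < A⁻¹ q q := by
    intro q
    have h := hBpd.dotProduct_mulVec_pos (x := Pi.single q 1) (fun h => by simpa using congrFun h q)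
    rw [hse, single_dotProduct, one_mul, mulVec_single] at h
    simpa using h
  have hAre : ∀ q : Fin n, A q q = ((A q q).re : ℂ) := by
    intro q
    have := (Complex.lt_def.mp (hApos q)).2
    exact Complex.ext rfl (by simp [← this])
  have hBre : ∀ q : Fin n, A⁻¹ q q = ((A⁻¹ q q).re : ℂ) := by
    intro q
    have := (Complex.lt_def.mp (hBpos q)).2
    exact Complex.ext rfl (by simp [← this])
  have hrpos : ∀ q : Fin n, 0 < (A q q).re := fun q => (Complex.lt_def.mp (hApos q)).1
  -- the key vector w and its quadratic form value
  set e : Fin n → (Fin n → ℂ) := fun q => Pi.single q 1 with he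
  set w : Fin n → (Fin n → ℂ) :=
    fun q => A q q • (A⁻¹ *ᵥ e q) - e q with hw
  have hAu : ∀ q, A *ᵥ (A⁻¹ *ᵥ e q) = e q := by
    intro q; rw [mulVec_mulVec, hAB, one_mulVec]
  have hD : ∀ q, star (w q) ⬝ᵥ A *ᵥ (w q)
      = A q q * A q q * A⁻¹ q q - A q q := by
    intro q
    have hsu : star (A⁻¹ *ᵥ e q) ⬝ᵥ e q = A⁻¹ q q := by
      rw [he]
      simp only [dotProduct_single, mul_one, Pi.star_apply]
      have : (A⁻¹ *ᵥ Pi.single q 1) q = A⁻¹ q q := by rw [mulVec_single]; simp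
      rw [this, RCLike.star_def, Complex.conj_eq_iff_im.mpr]
      have := (Complex.lt_def.mp (hBpos q)).2; simp [← this]
    have hs2 : star (A⁻¹ *ᵥ e q) ⬝ᵥ (A *ᵥ e q) = 1 := by
      rw [dotProduct_mulVec]
      have hv : star (A⁻¹ *ᵥ e q) ᵥ* A = star (e q) := by
        have hsm := star_mulVec (M := Aᴴ) (v := A⁻¹ *ᵥ e q)
        rw [conjTranspose_conjTranspose, hA.1, hAu] at hsm
        exact hsm.symm
      rw [hv, hse, he, single_dotProduct, one_mul]
      simp
    have hs4 : star (e q) ⬝ᵥ (A *ᵥ e q) = A q q := by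
      rw [hse, he, single_dotProduct, one_mul, mulVec_single]
      simp
    have hstarc : star (A q q) = A q q := by
      rw [RCLike.star_def, Complex.conj_eq_iff_im.mpr]
      have := (Complex.lt_def.mp (hApos q)).2; simp [← this]
    rw [hw]
    simp only [star_sub, star_smul, hstarc, mulVec_sub, mulVec_smul, hAu,
      sub_dotProduct, dotProduct_sub, smul_dotProduct, dotProduct_smul,
      hsu, hs2, hs4, smul_eq_mul]
    have hs3 : star (e q) ⬝ᵥ e q = 1 := by
      rw [hse, he, single_dotProduct, one_mul]; simp
    rw [hs3]
    ring
  -- w q = 0 iff column q is diagonal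
  have hw_iff : ∀ q, w q = 0 ↔ ∀ p, p ≠ q → A p q = 0 := by
    intro q
    constructor
    · intro h p hpq
      have h1 : A q q • (A⁻¹ *ᵥ e q) = e q := by
        have := sub_eq_zero.mp (hw ▸ h)
        exact this
      have h2 : A q q • e q = A *ᵥ e q := by
        conv_lhs => rw [← hAu q, ← mulVec_smul, h1]
      have h3 := congrFun h2 p
      simp only [Pi.smul_apply, he, Pi.single_apply, if_neg hpq, smul_eq_mul,
        mul_zero] at h3
      rw [mulVec_single] at h3
      simpa [hpq] using h3.symm
    · intro h
      have hcol : A *ᵥ e q = A q q • e q := by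
        ext p
        rcases eq_or_ne p q with hpq | hpq
        · subst hpq; rw [mulVec_single]; simp [he]
        · rw [mulVec_single]; simp [he, Pi.single_apply, hpq, h p hpq]
      have : A q q • (A⁻¹ *ᵥ e q) = e q := by
        rw [← mulVec_smul, ← hcol, mulVec_mulVec, hBA, one_mulVec]
      rw [hw]; simp only [this, sub_self]
  -- real quantity t q
  set t : Fin n → ℝ := fun q => (A q q).re ^ 2 * (A⁻¹ q q).re - (A q q).re with ht
  have hDre : ∀ q, star (w q) ⬝ᵥ A *ᵥ (w q) = ((t q : ℝ) : ℂ) := by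
    intro q
    rw [hD q, ht]
    rw [hAre q, hBre q]
    push_cast
    ring
  have ht_nonneg : ∀ q, 0 ≤ t q := by
    intro q
    have h0 := hA.posSemidef.dotProduct_mulVec_nonneg (w q)
    rw [hDre q] at h0
    exact_mod_cast Complex.zero_le_real.mp h0
  have ht_zero_iff : ∀ q, t q = 0 ↔ ∀ p, p ≠ q → A p q = 0 := by
    intro q
    rw [← hw_iff q]
    constructor
    · intro h
      by_contra hwne
      have := hA.dotProduct_mulVec_pos (x := w q) hwne
      rw [hDre q, h] at this
      simp at this
    · intro h
      have := hDre q
      rw [h] at this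
      simp only [star_zero, zero_dotProduct] at this
      exact_mod_cast (Complex.ofReal_eq_zero.mp this.symm)
  -- trace real part
  have htr : (A⁻¹).trace.re = ∑ q : Fin n, (A⁻¹ q q).re := by
    rw [Matrix.trace]
    exact Complex.re_sum _ _
  -- difference identity
  have hdiff : ∀ q : Fin n, (A⁻¹ q q).re - 1 / (A q q).re = t q / (A q q).re ^ 2 := by
    intro q
    have hr := (hrpos q).ne'
    field_simp [ht]
    ring
  have hsum : ∑ q : Fin n, (A⁻¹ q q).re - ∑ q : Fin n, 1 / (A q q).re
      = ∑ q : Fin n, t q / (A q q).re ^ 2 := by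
    rw [← Finset.sum_sub_distrib]
    exact Finset.sum_congr rfl fun q _ => hdiff q
  rw [htr, ← sub_eq_zero, hsum,
    Finset.sum_eq_zero_iff_of_nonneg (fun q _ =>
      div_nonneg (ht_nonneg q) (sq_nonneg _))]
  constructor
  · intro h p q hpq
    have hq := h q (Finset.mem_univ q)
    have : t q = 0 := by
      have h2 := div_eq_zero_iff.mp hq
      rcases h2 with h2 | h2
      · exact h2
      · exact absurd h2 (pow_ne_zero _ (hrpos q).ne')
    exact (ht_zero_iff q).mp this p hpq
  · intro h q _
    rw [(ht_zero_iff q).mpr (fun p hpq => h p q hpq), zero_div]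
end

section
/- Let N = 2M+2 and let D be the N×N DFT matrix with entries D_{mn} = exp(−2πi(m−1)(n−1)/N). Define V ∈ ℂ^{N×N} by taking column 1 of V equal to column 1 of D, column M+2 of V equal to column M+2 of D, and every other column n of V equal to (1/√2) times column n of D. Then VᴴV is a diagonal matrix and Tr[(VᴴV)⁻¹] = (2M+1)/(M+1). -/
open Matrix Finset

private lemma es_aux (M N : ℕ) (hM : 1 ≤ M) (hNdef : N = 2 * M + 2)
    (D V : Matrix (Fin N) (Fin N) ℂ)
    (hD : ∀ j k : Fin N,
      D j k = Complex.exp (-2 * Real.pi * Complex.I * (j : ℕ) * (k : ℕ) / N))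
    (hV : ∀ i n : Fin N,
      V i n = if n.1 = 0 ∨ n.1 = M + 1 then D i n
              else ((1 / Real.sqrt 2 : ℝ) : ℂ) * D i n) :
    (Vᴴ * V).IsDiag ∧
      ((Vᴴ * V)⁻¹).trace = ((2 * M + 1 : ℝ) / (M + 1) : ℂ) := by
  have hN0 : N ≠ 0 := by omega
  have hNC : (N : ℂ) ≠ 0 := Nat.cast_ne_zero.mpr hN0
  set w : ℂ := Complex.exp (2 * Real.pi * Complex.I / N) with hw_def
  have hw : IsPrimitiveRoot w N := Complex.isPrimitiveRoot_exp N hN0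
  have hw0 : w ≠ 0 := Complex.exp_ne_zero _
  have hwN : w ^ N = 1 := hw.pow_eq_one
  have hDpow : ∀ j k : Fin N, D j k = (w ^ (j.1 * k.1))⁻¹ := by
    intro j k
    rw [hD, hw_def, ← Complex.exp_nat_mul, ← Complex.exp_neg]
    congr 1
    push_cast
    ring
  have hconj : ∀ j k : Fin N, (starRingEnd ℂ) (D j k) = w ^ (j.1 * k.1) := by
    intro j k
    rw [hD, ← Complex.exp_conj, hw_def, ← Complex.exp_nat_mul]
    congr 1
    push_cast
    simp only [map_div₀, _root_.map_mul, map_neg, Complex.conj_I, Complex.conj_ofReal,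
      map_ofNat, map_natCast, map_add, map_inv₀]
    ring
  have hS : ∀ n n' : Fin N, (∑ j : Fin N, (starRingEnd ℂ) (D j n) * D j n') =
      if n = n' then (N : ℂ) else 0 := by
    intro n n'
    set r : ℂ := w ^ n.1 / w ^ n'.1 with hr
    have hsum : ∀ j : Fin N, (starRingEnd ℂ) (D j n) * D j n' = r ^ j.1 := by
      intro j
      rw [hconj, hDpow, hr, div_pow, ← pow_mul, ← pow_mul, div_eq_mul_inv,
        Nat.mul_comm j.1 n.1, Nat.mul_comm j.1 n'.1]
    rw [Finset.sum_congr rfl (fun j _ => hsum j)]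
    by_cases h : n = n'
    · subst h
      have hr1 : r = 1 := div_self (pow_ne_zero _ hw0)
      simp [hr1]
    · have hr1 : r ≠ 1 := by
        intro hcon
        exact h (Fin.ext (hw.pow_inj n.isLt n'.isLt
          ((div_eq_one_iff_eq (pow_ne_zero n'.1 hw0)).mp hcon)))
      have hrN : r ^ N = 1 := by
        rw [hr, div_pow, ← pow_mul, ← pow_mul, Nat.mul_comm n.1 N, Nat.mul_comm n'.1 N,
          pow_mul, pow_mul, hwN, one_pow, one_pow, div_one]
      rw [if_neg h, Fin.sum_univ_eq_sum_range (fun i => r ^ i) N, geom_sum_eq hr1,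
        hrN, sub_self, zero_div]
  set c : Fin N → ℂ := fun n =>
    if n.1 = 0 ∨ n.1 = M + 1 then 1 else ((1 / Real.sqrt 2 : ℝ) : ℂ) with hc
  have hVc : ∀ i n : Fin N, V i n = c n * D i n := by
    intro i n
    rw [hV, hc]
    by_cases h : n.1 = 0 ∨ n.1 = M + 1 <;> simp [h]
  have hcconj : ∀ n, (starRingEnd ℂ) (c n) = c n := by
    intro n
    rw [hc]
    by_cases h : n.1 = 0 ∨ n.1 = M + 1 <;> simp [h, Complex.conj_ofReal]
  set d : Fin N → ℂ := fun n =>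
    if n.1 = 0 ∨ n.1 = M + 1 then (N : ℂ) else (N : ℂ) / 2 with hd
  have hcc : ∀ n, c n * c n * (N : ℂ) = d n := by
    intro n
    rw [hc, hd]
    by_cases h : n.1 = 0 ∨ n.1 = M + 1
    · simp [h]
    · simp only [h, if_false]
      rw [← Complex.ofReal_mul]
      rw [show (1 / Real.sqrt 2) * (1 / Real.sqrt 2) = 1 / 2 by
        rw [div_mul_div_comm, one_mul, Real.mul_self_sqrt (by norm_num)]]
      push_cast
      ring
  have hdiag : Vᴴ * V = Matrix.diagonal d := by
    ext n n'
    rw [Matrix.mul_apply]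
    have step : ∀ j : Fin N, Vᴴ n j * V j n' =
        (c n * c n') * ((starRingEnd ℂ) (D j n) * D j n') := by
      intro j
      rw [Matrix.conjTranspose_apply, hVc, hVc]
      simp only [star_mul', RCLike.star_def, hcconj]
      ring
    rw [Finset.sum_congr rfl (fun j _ => step j), ← Finset.mul_sum, hS]
    by_cases h : n = n'
    · subst h
      simp only [if_pos rfl, Matrix.diagonal_apply_eq]
      exact hcc n
    · simp [h, Matrix.diagonal_apply_ne _ h]
  have hd0 : ∀ n, d n ≠ 0 := by
    intro n
    rw [hd]
    by_cases h : n.1 = 0 ∨ n.1 = M + 1 <;> simp [h, hNC]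
  constructor
  · rw [hdiag]; exact Matrix.isDiag_diagonal d
  · have hinvd : (Matrix.diagonal d)⁻¹ = Matrix.diagonal (fun n => (d n)⁻¹) := by
      apply Matrix.inv_eq_right_inv
      rw [Matrix.diagonal_mul_diagonal]
      ext n n'
      by_cases h : n = n'
      · subst h; simp [mul_inv_cancel₀ (hd0 n), Matrix.one_apply_eq]
      · simp [Matrix.diagonal_apply_ne _ h, Matrix.one_apply_ne h]
    rw [hdiag, hinvd, Matrix.trace_diagonal]
    have hinv : ∀ n : Fin N, (d n)⁻¹ =
        if n.1 = 0 ∨ n.1 = M + 1 then (N : ℂ)⁻¹ else 2 / (N : ℂ) := by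
      intro n
      rw [hd]
      by_cases h : n.1 = 0 ∨ n.1 = M + 1 <;> simp [h, one_div]
    rw [Finset.sum_congr rfl (fun n _ => hinv n), Finset.sum_ite, Finset.sum_const,
      Finset.sum_const]
    have hfilter : Finset.univ.filter (fun n : Fin N => n.1 = 0 ∨ n.1 = M + 1) =
        {(⟨0, by omega⟩ : Fin N), ⟨M + 1, by omega⟩} := by
      ext n
      simp [Fin.ext_iff]
    have hcard1 : (Finset.univ.filter (fun n : Fin N => n.1 = 0 ∨ n.1 = M + 1)).card = 2 := by
      rw [hfilter, Finset.card_insert_of_notMem (by simp [Fin.ext_iff]),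
        Finset.card_singleton]
    have hcard2 : (Finset.univ.filter (fun n : Fin N => ¬(n.1 = 0 ∨ n.1 = M + 1))).card
        = 2 * M := by
      have := Finset.card_filter_add_card_filter_not (s := (Finset.univ : Finset (Fin N)))
        (p := fun n : Fin N => n.1 = 0 ∨ n.1 = M + 1)
      rw [Finset.card_univ, Fintype.card_fin] at this
      omega
    rw [hcard1, hcard2]
    have hNcast : (N : ℂ) = 2 * (M : ℂ) + 2 := by rw [hNdef]; push_cast; ring
    have hM1 : (M : ℂ) + 1 ≠ 0 := by
      intro h
      have : ((M + 1 : ℕ) : ℂ) = 0 := by push_cast; linear_combination h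
      exact_mod_cast Nat.cast_ne_zero.mpr (by omega) this
    have h2 : 2 * (M : ℂ) + 2 ≠ 0 := by
      intro h
      exact hM1 (by linear_combination h / 2)
    rw [hNcast]
    push_cast
    field_simp
    have h4 : (2 + (M : ℂ) * 2) ≠ 0 := by rw [add_comm, mul_comm]; exact h2
    have h5 : (1 + (M : ℂ)) ≠ 0 := by rw [add_comm]; exact hM1
    ring_nf
    field_simp
    ring

/-- Let `N = 2M+2` and let `D` be the `N × N` DFT matrix with 0-based entries
`D j k = exp(-2πi·jk/N)`.  Define `V` by taking columns `0` and `M+1` (0-based;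
columns `1` and `M+2` in 1-based indexing) of `V` equal to the corresponding
columns of `D`, and every other column equal to `1/√2` times the corresponding
column of `D`.  Then `VᴴV` is diagonal and `Tr[(VᴴV)⁻¹] = (2M+1)/(M+1)`. -/
theorem es_ideal_dft_measurement_matrix (M : ℕ) (hM : 1 ≤ M)
    (D V : Matrix (Fin (2 * M + 2)) (Fin (2 * M + 2)) ℂ)
    (hD : ∀ j k : Fin (2 * M + 2),
      D j k = Complex.exp (-2 * Real.pi * Complex.I * (j : ℕ) * (k : ℕ) / (2 * M + 2)))
    (hV : ∀ i n : Fin (2 * M + 2),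
      V i n = if n.1 = 0 ∨ n.1 = M + 1 then D i n
              else ((1 / Real.sqrt 2 : ℝ) : ℂ) * D i n) :
    (Vᴴ * V).IsDiag ∧
      ((Vᴴ * V)⁻¹).trace = ((2 * M + 1 : ℝ) / (M + 1) : ℂ) := by
  refine es_aux M (2 * M + 2) hM rfl D V ?_ hV
  intro j k
  rw [hD]
  congr 1
  push_cast
  ring
end

section
/- Let N = 2M+2, let D be the N×N DFT matrix with entries D_{mn} = exp(−2πi(m−1)(n−1)/N), let s_t(i) = 1 for all i, and let s_r(i) = (−1)^{i−1}·i_ℂ (i.e., the alternating sequence j, −j, j, −j, …, where i_ℂ = √−1). Define the unit-modulus training coefficients a(m,i) = D_{i,m+1}/s_t(i) and b(m,i) = D_{i,m+M+2}/s_r(i) for 1 ≤ m ≤ M, 1 ≤ i ≤ N. Then a(m,i) = i_ℂ · b(m,i) for all m, i; consequently Re(a(m,i) · conj(b(m,i))) = 0, so the coupled phase-shift constraint cos(θ_{m,i} − φ_{m,i}) = 0 is satisfied. -/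
open Matrix

/-- With the DFT matrix `D` of size `N = 2M+2`, pilot sequences `s_t i = 1` and
`s_r i = (-1)^i · I` (the alternating sequence `j, -j, j, -j, …`, 0-based rows),
define the unit-modulus training coefficients `a m i = D i (m+1) / s_t i` and
`b m i = D i (m+M+2) / s_r i` (0-based columns `m+1` and `M+2+m`).  Then
`a m i = I · b m i` for all `m, i`; consequently `Re(a m i · conj (b m i)) = 0`,
i.e., the coupled phase-shift constraint `cos(θ_{m,i} - φ_{m,i}) = 0` holds. -/
theorem coupled_phase_constraint_satisfied (M : ℕ) (hM : 1 ≤ M)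
    (D : Matrix (Fin (2 * M + 2)) (Fin (2 * M + 2)) ℂ)
    (hD : ∀ j k : Fin (2 * M + 2),
      D j k = Complex.exp (-2 * Real.pi * Complex.I * (j : ℕ) * (k : ℕ) / (2 * M + 2)))
    (s_t s_r : Fin (2 * M + 2) → ℂ)
    (hst : ∀ i, s_t i = 1)
    (hsr : ∀ i, s_r i = (-1 : ℂ) ^ (i : ℕ) * Complex.I)
    (a b : Fin M → Fin (2 * M + 2) → ℂ)
    (ha : ∀ m i, a m i = D i ⟨m.1 + 1, by have := m.isLt; omega⟩ / s_t i)
    (hb : ∀ m i, b m i = D i ⟨M + 2 + m.1, by have := m.isLt; omega⟩ / s_r i) :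
    ∀ (m : Fin M) (i : Fin (2 * M + 2)),
      a m i = Complex.I * b m i ∧ (a m i * (starRingEnd ℂ) (b m i)).re = 0 := by
  intro m i
  have hN : ((2 : ℂ) * M + 2) ≠ 0 := by
    have h : ((2 * M + 2 : ℕ) : ℂ) ≠ 0 := Nat.cast_ne_zero.2 (by omega)
    push_cast at h
    exact h
  have hexpI : Complex.exp ((i : ℕ) * (-(Real.pi * Complex.I))) = (-1 : ℂ) ^ (i : ℕ) := by
    rw [Complex.exp_nat_mul, Complex.exp_neg, Complex.exp_pi_mul_I]
    norm_num
  have key : D i ⟨M + 2 + m.1, by have := m.isLt; omega⟩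
      = (-1 : ℂ) ^ (i : ℕ) * D i ⟨m.1 + 1, by have := m.isLt; omega⟩ := by
    rw [hD, hD]
    simp only [Fin.val_mk]
    rw [← hexpI, ← Complex.exp_add]
    congr 1
    have : ((M + 2 + m.1 : ℕ) : ℂ) = (M : ℂ) + 2 + (m.1 : ℕ) := by push_cast; ring
    rw [this]
    have h2 : ((m.1 + 1 : ℕ) : ℂ) = ((m.1 : ℕ) : ℂ) + 1 := by push_cast; ring
    rw [h2]
    field_simp
    ring
  have hab : a m i = Complex.I * b m i := by
    rw [ha, hb, hst, hsr, key]
    have hpow : ((-1 : ℂ) ^ (i : ℕ)) ≠ 0 := by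
      apply pow_ne_zero; norm_num
    field_simp
  refine ⟨hab, ?_⟩
  rw [hab, mul_assoc, Complex.mul_conj]
  simp
end
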